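/- arXiv:1802.08237 — 8 statements merged into one kernel-verified Lean document; each statement's English description precedes it below -/
import Mathlib

section
/- In the process Central run with parameter ε (0 < ε ≤ 1/10) on a finite simple graph G with n ≥ 2 vertices: (i) for every iteration t ≥ 0 and every vertex v, the weight ∑_{e ∋ v} x_e(t) is at most 1 (so x(t) is a fractional matching at all times); and (ii) for every integer t ≥ 1 + ln(n)/ln(1/(1-ε)), every edge of G has an endpoint in F_t, i.e., all edges are frozen after at most O(log n / ε) iterations. -/
open Finset

/-- In the process `Central` run with parameter `ε` (`0 < ε ≤ 1/10`) on a
finite simple graph `G` with `n ≥ 2` vertices: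
(i) for every iteration `t` and vertex `v`, the weight `∑_{e ∋ v} x_e(t)` is at most `1`;
(ii) for every integer `t ≥ 1 + ln n / ln (1/(1-ε))`, every edge has an endpoint in `F_t`. -/
theorem central_fractional_matching_and_termination
    {V : Type*} [Fintype V] [DecidableEq V] (G : SimpleGraph V) [DecidableRel G.Adj]
    (n : ℕ) (hn : n = Fintype.card V) (hn2 : 2 ≤ n)
    (ε : ℝ) (hε0 : 0 < ε) (hε1 : ε ≤ 1 / 10)
    (F : ℕ → Finset V) (x : ℕ → Sym2 V → ℝ)
    (hF0 : F 0 = ∅)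
    (hx0 : ∀ e ∈ G.edgeFinset, x 0 e = 1 / n)
    (hF : ∀ t : ℕ, F (t + 1) = F t ∪
      Finset.univ.filter
        (fun v => 1 - 2 * ε ≤ ∑ e ∈ G.edgeFinset.filter (fun e => v ∈ e), x t e))
    (hx : ∀ t : ℕ, ∀ e ∈ G.edgeFinset,
      x (t + 1) e = if ∃ v ∈ F (t + 1), v ∈ e then x t e else x t e / (1 - ε)) :
    (∀ t : ℕ, ∀ v : V, ∑ e ∈ G.edgeFinset.filter (fun e => v ∈ e), x t e ≤ 1) ∧
    (∀ t : ℕ, 1 + Real.log n / Real.log (1 / (1 - ε)) ≤ (t : ℝ) →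
      ∀ e ∈ G.edgeFinset, ∃ v ∈ F t, v ∈ e) := by
  have hεlt : ε < 1 := by linarith
  have h1ε : (0 : ℝ) < 1 - ε := by linarith
  have hnpos : (0 : ℝ) < (n : ℝ) := by positivity
  -- nonnegativity of x
  have hnonneg : ∀ t : ℕ, ∀ e ∈ G.edgeFinset, 0 ≤ x t e := by
    intro t
    induction t with
    | zero => intro e he; rw [hx0 e he]; positivity
    | succ t ih =>
      intro e he
      rw [hx t e he]
      split
      · exact ih e he
      · exact div_nonneg (ih e he) h1ε.le
  -- monotonicity of F
  have hmono : ∀ s t : ℕ, s ≤ t → F s ⊆ F t := by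
    intro s t hst
    induction t, hst using Nat.le_induction with
    | base => exact subset_rfl
    | succ t ht ih => rw [hF t]; exact ih.trans subset_union_left
  -- part (i)
  have part1 : ∀ t : ℕ, ∀ v : V,
      ∑ e ∈ G.edgeFinset.filter (fun e => v ∈ e), x t e ≤ 1 := by
    intro t
    induction t with
    | zero =>
      intro v
      have hsum : ∑ e ∈ G.edgeFinset.filter (fun e => v ∈ e), x 0 e
          = (G.edgeFinset.filter (fun e => v ∈ e)).card * (1 / (n : ℝ)) := by
        rw [Finset.sum_congr rfl (fun e he => hx0 e (Finset.mem_filter.mp he).1)]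
        simp [Finset.sum_const, nsmul_eq_mul]
      rw [hsum]
      have hcard : (G.edgeFinset.filter (fun e => v ∈ e)).card ≤ n := by
        have h1 : G.edgeFinset.filter (fun e => v ∈ e) = G.incidenceFinset v := by
          rw [SimpleGraph.incidenceFinset_eq_filter]
        rw [h1, SimpleGraph.card_incidenceFinset_eq_degree]
        calc G.degree v ≤ Fintype.card V - 1 := Nat.le_sub_one_of_lt (G.degree_lt_card_verts v)
          _ ≤ n := by omega
      calc ((G.edgeFinset.filter (fun e => v ∈ e)).card : ℝ) * (1 / (n : ℝ))
          ≤ (n : ℝ) * (1 / (n : ℝ)) := by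
            apply mul_le_mul_of_nonneg_right _ (by positivity)
            exact_mod_cast hcard
        _ = 1 := by field_simp
    | succ t ih =>
      intro v
      by_cases hv : v ∈ F (t + 1)
      · have : ∑ e ∈ G.edgeFinset.filter (fun e => v ∈ e), x (t + 1) e
            = ∑ e ∈ G.edgeFinset.filter (fun e => v ∈ e), x t e := by
          apply Finset.sum_congr rfl
          intro e he
          obtain ⟨he1, he2⟩ := Finset.mem_filter.mp he
          rw [hx t e he1, if_pos ⟨v, hv, he2⟩]
        rw [this]; exact ih v
      · have hw : ∑ e ∈ G.edgeFinset.filter (fun e => v ∈ e), x t e < 1 - 2 * ε := by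
          by_contra hcon
          push_neg at hcon
          exact hv (by rw [hF t]; simp only [Finset.mem_union, Finset.mem_filter,
            Finset.mem_univ, true_and]; exact Or.inr hcon)
        have hstep : ∑ e ∈ G.edgeFinset.filter (fun e => v ∈ e), x (t + 1) e
            ≤ (∑ e ∈ G.edgeFinset.filter (fun e => v ∈ e), x t e) / (1 - ε) := by
          rw [Finset.sum_div]
          apply Finset.sum_le_sum
          intro e he
          obtain ⟨he1, _⟩ := Finset.mem_filter.mp he
          rw [hx t e he1]
          split
          · rw [le_div_iff₀ h1ε]
            nlinarith [hnonneg t e he1]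
          · exact le_rfl
        calc ∑ e ∈ G.edgeFinset.filter (fun e => v ∈ e), x (t + 1) e
            ≤ (∑ e ∈ G.edgeFinset.filter (fun e => v ∈ e), x t e) / (1 - ε) := hstep
          _ ≤ (1 - 2 * ε) / (1 - ε) := by
              exact (div_le_div_iff_of_pos_right h1ε).mpr hw.le
          _ ≤ 1 := by rw [div_le_one h1ε]; linarith
  refine ⟨part1, ?_⟩
  intro t ht e he
  by_contra hcon
  push_neg at hcon
  -- the log on the right is positive
  have h1div : (1 : ℝ) < 1 / (1 - ε) := by
    rw [lt_div_iff₀ h1ε]; linarith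
  have hL : 0 < Real.log (1 / (1 - ε)) := Real.log_pos h1div
  have hlogn : 0 ≤ Real.log n := Real.log_nonneg (by exact_mod_cast hn2.trans' (by norm_num))
  have ht1 : 1 ≤ t := by
    by_contra h
    push_neg at h
    interval_cases t
    have h0 : (0:ℝ) ≤ Real.log n / Real.log (1/(1-ε)) := div_nonneg hlogn hL.le
    push_cast at ht
    linarith
  obtain ⟨s, rfl⟩ : ∃ s, t = s + 1 := ⟨t - 1, by omega⟩
  -- no endpoint frozen at any time ≤ s+1
  have hnofreeze : ∀ m ≤ s + 1, ¬ ∃ v ∈ F m, v ∈ e := by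
    intro m hm ⟨v, hv1, hv2⟩
    exact hcon v (hmono m (s + 1) hm hv1) hv2
  -- formula for x m e
  have hform : ∀ m ≤ s + 1, x m e = (1 / (n : ℝ)) * ((1 - ε)⁻¹) ^ m := by
    intro m
    induction m with
    | zero => intro _; simp [hx0 e he]
    | succ m ih =>
      intro hm
      rw [hx m e he, if_neg (hnofreeze (m + 1) hm), ih (by omega)]
      rw [pow_succ]
      field_simp
  -- (1/(1-ε))^s ≥ n
  have hsL : Real.log n ≤ (s : ℝ) * Real.log (1 / (1 - ε)) := by
    have : Real.log n / Real.log (1 / (1 - ε)) ≤ (s : ℝ) := by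
      push_cast at ht; linarith
    calc Real.log n = (Real.log n / Real.log (1 / (1 - ε))) * Real.log (1 / (1 - ε)) := by
          field_simp
      _ ≤ (s : ℝ) * Real.log (1 / (1 - ε)) := by
          apply mul_le_mul_of_nonneg_right this hL.le
  have hpow : (n : ℝ) ≤ ((1 - ε)⁻¹) ^ s := by
    have h1 : (n : ℝ) = Real.exp (Real.log n) := (Real.exp_log hnpos).symm
    have h2 : ((1 - ε)⁻¹ : ℝ) ^ s = Real.exp ((s : ℝ) * Real.log (1 / (1 - ε))) := by
      rw [Real.exp_nat_mul, Real.exp_log (by positivity)]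
      norm_num
    rw [h1, h2]
    exact Real.exp_le_exp.mpr hsL
  -- x s e ≥ 1
  have hxs : (1 : ℝ) ≤ x s e := by
    rw [hform s (by omega)]
    calc (1 : ℝ) = (1 / (n : ℝ)) * n := by field_simp
      _ ≤ (1 / (n : ℝ)) * ((1 - ε)⁻¹) ^ s := by
          apply mul_le_mul_of_nonneg_left hpow (by positivity)
  -- pick an endpoint of e
  induction e using Sym2.ind with
  | _ a b =>
    have ha : a ∉ F (s + 1) := fun h => hcon a h (by simp)
    have hwa : ∑ e' ∈ G.edgeFinset.filter (fun e' => a ∈ e'), x s e' < 1 - 2 * ε := by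
      by_contra hc
      push_neg at hc
      exact ha (by rw [hF s]; simp only [Finset.mem_union, Finset.mem_filter,
        Finset.mem_univ, true_and]; exact Or.inr hc)
    have hmem : s(a, b) ∈ G.edgeFinset.filter (fun e' => a ∈ e') :=
      Finset.mem_filter.mpr ⟨he, by simp⟩
    have hle : x s s(a, b) ≤ ∑ e' ∈ G.edgeFinset.filter (fun e' => a ∈ e'), x s e' :=
      Finset.single_le_sum (fun e' he' => hnonneg s e' (Finset.mem_filter.mp he').1) hmem
    linarith
end

section
/- Let T be any iteration of the process Central (run with 0 < ε ≤ 1/10 on a finite simple graph G with n ≥ 2 vertices) at which every edge of G has an endpoint in F_T. Then F_T is a vertex cover of G, and |F_T| ≤ (2 + 5ε)·τ(G), where τ(G) denotes the minimum size of a vertex cover of G. -/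
open Finset

/-- If at iteration `T` of the process `Central` every edge of `G` has an
endpoint in `F_T`, then `F_T` is a vertex cover of `G` of size at most `(2 + 5ε)` times the
minimum vertex cover size (equivalently, `|F_T| ≤ (2+5ε)·|C|` for every vertex cover `C`). -/
theorem central_vertex_cover_approximation
    {V : Type*} [Fintype V] [DecidableEq V] (G : SimpleGraph V) [DecidableRel G.Adj]
    (n : ℕ) (hn : n = Fintype.card V) (hn2 : 2 ≤ n)
    (ε : ℝ) (hε0 : 0 < ε) (hε1 : ε ≤ 1 / 10)
    (F : ℕ → Finset V) (x : ℕ → Sym2 V → ℝ)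
    (hF0 : F 0 = ∅)
    (hx0 : ∀ e ∈ G.edgeFinset, x 0 e = 1 / n)
    (hF : ∀ t : ℕ, F (t + 1) = F t ∪
      Finset.univ.filter
        (fun v => 1 - 2 * ε ≤ ∑ e ∈ G.edgeFinset.filter (fun e => v ∈ e), x t e))
    (hx : ∀ t : ℕ, ∀ e ∈ G.edgeFinset,
      x (t + 1) e = if ∃ v ∈ F (t + 1), v ∈ e then x t e else x t e / (1 - ε))
    (T : ℕ) (hT : ∀ e ∈ G.edgeFinset, ∃ v ∈ F T, v ∈ e) :
    (∀ e ∈ G.edgeFinset, ∃ v ∈ F T, v ∈ e) ∧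
    (∀ C : Finset V, (∀ e ∈ G.edgeFinset, ∃ v ∈ C, v ∈ e) →
      ((F T).card : ℝ) ≤ (2 + 5 * ε) * C.card) := by
  have hε2 : (0:ℝ) < 1 - ε := by linarith
  have hε3 : (0:ℝ) < 1 - 2 * ε := by linarith
  set D : V → ℕ → ℝ := fun v t => ∑ e ∈ G.edgeFinset.filter (fun e => v ∈ e), x t e with hDdef
  -- nonnegativity of weights
  have hxpos : ∀ t, ∀ e ∈ G.edgeFinset, 0 ≤ x t e := by
    intro t
    induction t with
    | zero => intro e he; rw [hx0 e he]; positivity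
    | succ t ih =>
      intro e he
      rw [hx t e he]
      split
      · exact ih e he
      · exact div_nonneg (ih e he) (le_of_lt hε2)
  -- once a vertex is in F, its incident edge weights are frozen
  have hfreeze : ∀ t, ∀ v ∈ F (t + 1), D v (t + 1) = D v t := by
    intro t v hv
    refine Finset.sum_congr rfl fun e he => ?_
    rw [Finset.mem_filter] at he
    rw [hx t e he.1, if_pos ⟨v, hv, he.2⟩]
  -- degrees stay at most 1
  have hD1 : ∀ t v, D v t ≤ 1 := by
    intro t
    induction t with
    | zero =>
      intro v
      have hsum : D v 0 = (G.edgeFinset.filter (fun e => v ∈ e)).card * (1 / (n:ℝ)) := by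
        rw [hDdef]
        simp only
        rw [Finset.sum_congr rfl (fun e he => hx0 e (Finset.mem_filter.1 he).1),
          Finset.sum_const, nsmul_eq_mul]
      have hcard : (G.edgeFinset.filter (fun e => v ∈ e)).card < n := by
        have h1 : G.edgeFinset.filter (fun e => v ∈ e) = G.incidenceFinset v :=
          (G.incidenceFinset_eq_filter v).symm
        rw [h1, G.card_incidenceFinset_eq_degree v, hn]
        exact G.degree_lt_card_verts v
      have hn0 : (0:ℝ) < n := by positivity
      rw [hsum]
      rw [mul_one_div, div_le_one hn0]
      exact_mod_cast le_of_lt hcard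
    | succ t ih =>
      intro v
      by_cases hv : v ∈ F (t + 1)
      · rw [hfreeze t v hv]; exact ih v
      · have hlt : D v t < 1 - 2 * ε := by
          by_contra h
          push_neg at h
          exact hv (by
            rw [hF t]
            exact Finset.mem_union_right _
              (Finset.mem_filter.2 ⟨Finset.mem_univ v, h⟩))
        have hstep : D v (t + 1) ≤ D v t / (1 - ε) := by
          calc D v (t + 1)
              ≤ ∑ e ∈ G.edgeFinset.filter (fun e => v ∈ e), x t e / (1 - ε) := by
                refine Finset.sum_le_sum fun e he => ?_
                rw [Finset.mem_filter] at he
                rw [hx t e he.1]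
                split
                · have h0 := hxpos t e he.1
                  rw [le_div_iff₀ hε2]
                  nlinarith
                · exact le_rfl
            _ = D v t / (1 - ε) := by rw [← Finset.sum_div]
        have : D v t / (1 - ε) ≤ 1 := by
          rw [div_le_one hε2]; linarith
        linarith
  -- vertices in F have degree at least 1 - 2ε
  have hQ : ∀ t, ∀ v ∈ F t, 1 - 2 * ε ≤ D v t := by
    intro t
    induction t with
    | zero => intro v hv; rw [hF0] at hv; exact absurd hv (Finset.notMem_empty v)
    | succ t ih =>
      intro v hv
      rw [hfreeze t v hv]
      rw [hF t, Finset.mem_union] at hv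
      rcases hv with h | h
      · exact ih v h
      · exact (Finset.mem_filter.1 h).2
  -- double counting
  have hswap : ∀ A : Finset V,
      ∑ v ∈ A, D v T = ∑ e ∈ G.edgeFinset, ((A.filter (fun v => v ∈ e)).card : ℝ) * x T e := by
    intro A
    calc ∑ v ∈ A, D v T
        = ∑ v ∈ A, ∑ e ∈ G.edgeFinset, if v ∈ e then x T e else 0 := by
          refine Finset.sum_congr rfl fun v _ => ?_
          rw [hDdef]; exact (Finset.sum_filter _ _)
      _ = ∑ e ∈ G.edgeFinset, ∑ v ∈ A, if v ∈ e then x T e else 0 := Finset.sum_comm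
      _ = ∑ e ∈ G.edgeFinset, ((A.filter (fun v => v ∈ e)).card : ℝ) * x T e := by
          refine Finset.sum_congr rfl fun e _ => ?_
          rw [← Finset.sum_filter, Finset.sum_const, nsmul_eq_mul]
  have hcard2 : ∀ (A : Finset V) (e : Sym2 V), (A.filter (fun v => v ∈ e)).card ≤ 2 := by
    intro A e
    induction e with
    | _ a b =>
      have hsub : A.filter (fun v => v ∈ s(a, b)) ⊆ {a, b} := by
        intro v hv
        rcases Sym2.mem_iff.1 (Finset.mem_filter.1 hv).2 with h | h <;> simp [h]
      calc (A.filter (fun v => v ∈ s(a, b))).card ≤ ({a, b} : Finset V).card :=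
            Finset.card_le_card hsub
        _ ≤ 2 := by
            refine le_trans (Finset.card_insert_le a {b}) ?_
            simp
  refine ⟨hT, fun C hC => ?_⟩
  -- lower bound: (1-2ε)|F_T| ≤ 2 * S
  have h1 : (1 - 2 * ε) * (F T).card ≤ ∑ v ∈ F T, D v T := by
    calc (1 - 2 * ε) * ((F T).card : ℝ) = ∑ _v ∈ F T, (1 - 2 * ε) := by
          rw [Finset.sum_const, nsmul_eq_mul]; ring
      _ ≤ ∑ v ∈ F T, D v T := Finset.sum_le_sum fun v hv => hQ T v hv
  have h2 : ∑ v ∈ F T, D v T ≤ 2 * ∑ e ∈ G.edgeFinset, x T e := by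
    rw [hswap, Finset.mul_sum]
    refine Finset.sum_le_sum fun e he => ?_
    have := hxpos T e he
    have hc : (((F T).filter (fun v => v ∈ e)).card : ℝ) ≤ 2 := by
      exact_mod_cast hcard2 (F T) e
    nlinarith
  have h3 : ∑ e ∈ G.edgeFinset, x T e ≤ ∑ v ∈ C, D v T := by
    rw [hswap]
    refine Finset.sum_le_sum fun e he => ?_
    have hx0' := hxpos T e he
    have hne : 1 ≤ ((C.filter (fun v => v ∈ e)).card : ℝ) := by
      obtain ⟨v, hvC, hve⟩ := hC e he
      have : 0 < (C.filter (fun v => v ∈ e)).card :=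
        Finset.card_pos.2 ⟨v, Finset.mem_filter.2 ⟨hvC, hve⟩⟩
      exact_mod_cast this
    nlinarith
  have h4 : ∑ v ∈ C, D v T ≤ (C.card : ℝ) := by
    calc ∑ v ∈ C, D v T ≤ ∑ _v ∈ C, (1:ℝ) := Finset.sum_le_sum fun v _ => hD1 T v
      _ = C.card := by rw [Finset.sum_const, nsmul_eq_mul, mul_one]
  have hcnn : (0:ℝ) ≤ C.card := by positivity
  have key : (1 - 2 * ε) * ((F T).card : ℝ) ≤ 2 * (C.card : ℝ) := by linarith
  have h5 : (0:ℝ) ≤ (ε - 10 * ε ^ 2) * C.card := by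
    apply mul_nonneg _ hcnn
    nlinarith
  have h6 : (1 - 2 * ε) * ((F T).card : ℝ) ≤ (1 - 2 * ε) * ((2 + 5 * ε) * C.card) := by
    nlinarith
  exact le_of_mul_le_mul_left h6 hε3
end

section
/- Let T be any iteration of the process Central (run with 0 < ε ≤ 1/10 on a finite simple graph G with n ≥ 2 vertices) at which every edge of G has an endpoint in F_T. Then the fractional matching produced satisfies ∑_{e ∈ E} x_e(T) ≥ ν(G)/(2 + 5ε), where ν(G) denotes the maximum size of a matching of G. -/
open Finset

/-- If at iteration `T` of the process `Central` every edge of `G` has an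
endpoint in `F_T`, then the produced fractional matching satisfies
`∑_{e ∈ E} x_e(T) ≥ ν(G)/(2 + 5ε)`, where `ν(G)` is the maximum matching size
(equivalently, `|M|/(2+5ε) ≤ ∑_e x_e(T)` for every matching `M` of `G`). -/
theorem central_fractional_matching_approximation
    {V : Type*} [Fintype V] [DecidableEq V] (G : SimpleGraph V) [DecidableRel G.Adj]
    (n : ℕ) (hn : n = Fintype.card V) (hn2 : 2 ≤ n)
    (ε : ℝ) (hε0 : 0 < ε) (hε1 : ε ≤ 1 / 10)
    (F : ℕ → Finset V) (x : ℕ → Sym2 V → ℝ)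
    (hF0 : F 0 = ∅)
    (hx0 : ∀ e ∈ G.edgeFinset, x 0 e = 1 / n)
    (hF : ∀ t : ℕ, F (t + 1) = F t ∪
      Finset.univ.filter
        (fun v => 1 - 2 * ε ≤ ∑ e ∈ G.edgeFinset.filter (fun e => v ∈ e), x t e))
    (hx : ∀ t : ℕ, ∀ e ∈ G.edgeFinset,
      x (t + 1) e = if ∃ v ∈ F (t + 1), v ∈ e then x t e else x t e / (1 - ε))
    (T : ℕ) (hT : ∀ e ∈ G.edgeFinset, ∃ v ∈ F T, v ∈ e) :
    ∀ M : Finset (Sym2 V), M ⊆ G.edgeFinset →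
      (∀ e ∈ M, ∀ f ∈ M, e ≠ f → ∀ v : V, v ∈ e → v ∉ f) →
      (M.card : ℝ) / (2 + 5 * ε) ≤ ∑ e ∈ G.edgeFinset, x T e := by
  intro M hM hMd
  have hε' : (0:ℝ) < 1 - ε := by linarith
  have hnpos : (0:ℝ) < (n:ℝ) := by positivity
  -- nonnegativity
  have hxnn : ∀ t, ∀ e ∈ G.edgeFinset, 0 ≤ x t e := by
    intro t
    induction t with
    | zero =>
      intro e he; rw [hx0 e he]; positivity
    | succ t ih =>
      intro e he; rw [hx t e he]
      split
      · exact ih e he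
      · exact div_nonneg (ih e he) hε'.le
  -- monotonicity in one step
  have hxmono1 : ∀ t, ∀ e ∈ G.edgeFinset, x t e ≤ x (t + 1) e := by
    intro t e he
    rw [hx t e he]
    split
    · exact le_refl _
    · have h0 := hxnn t e he
      rw [le_div_iff₀ hε']
      nlinarith
  -- monotonicity
  have hxmono : ∀ s t, s ≤ t → ∀ e ∈ G.edgeFinset, x s e ≤ x t e := by
    intro s t hst
    induction t, hst using Nat.le_induction with
    | base => intro e _; exact le_refl _
    | succ t ht ih =>
      intro e he
      exact le_trans (ih e he) (hxmono1 t e he)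
  -- frozen vertices have large weight
  have hfrozen : ∀ t, ∀ v ∈ F t,
      1 - 2 * ε ≤ ∑ e ∈ G.edgeFinset.filter (fun e => v ∈ e), x t e := by
    intro t
    induction t with
    | zero => simp [hF0]
    | succ t ih =>
      intro v hv
      rw [hF t] at hv
      have hstep : (1 - 2 * ε ≤ ∑ e ∈ G.edgeFinset.filter (fun e => v ∈ e), x t e) →
          1 - 2 * ε ≤ ∑ e ∈ G.edgeFinset.filter (fun e => v ∈ e), x (t + 1) e := by
        intro h
        refine le_trans h (Finset.sum_le_sum ?_)
        intro e he
        exact hxmono1 t e (Finset.mem_filter.1 he).1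
      rcases Finset.mem_union.1 hv with h | h
      · exact hstep (ih v h)
      · exact hstep (Finset.mem_filter.1 h).2
  -- choose a frozen endpoint for each matching edge
  have hchoice : ∀ e ∈ M, ∃ v ∈ F T, v ∈ e := fun e he => hT e (hM he)
  classical
  have hVne : Nonempty V := by
    have : 0 < Fintype.card V := by omega
    exact Fintype.card_pos_iff.mp this
  set g : Sym2 V → V := fun e =>
    if h : ∃ v ∈ F T, v ∈ e then h.choose else Classical.choice hVne
    with hg
  have hgF : ∀ e ∈ M, g e ∈ F T := by
    intro e he
    have h := hchoice e he
    simp only [hg, dif_pos h]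
    exact h.choose_spec.1
  have hge : ∀ e ∈ M, g e ∈ e := by
    intro e he
    have h := hchoice e he
    simp only [hg, dif_pos h]
    exact h.choose_spec.2
  have hginj : ∀ e ∈ M, ∀ f ∈ M, g e = g f → e = f := by
    intro e he f hf hgef
    by_contra hne
    exact hMd e he f hf hne (g e) (hge e he) (hgef ▸ hge f hf)
  set S : Finset V := M.image g with hS
  -- lower bound on the double sum
  have hlow : (M.card : ℝ) * (1 - 2 * ε) ≤
      ∑ v ∈ S, ∑ e ∈ G.edgeFinset.filter (fun e => v ∈ e), x T e := by
    rw [hS, Finset.sum_image hginj]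
    calc (M.card : ℝ) * (1 - 2 * ε) = ∑ _e ∈ M, (1 - 2 * ε) := by
          rw [Finset.sum_const, nsmul_eq_mul]
      _ ≤ _ := Finset.sum_le_sum fun e he => hfrozen T (g e) (hgF e he)
  -- upper bound on the double sum (double counting)
  have hupper : ∑ v ∈ S, ∑ e ∈ G.edgeFinset.filter (fun e => v ∈ e), x T e ≤
      2 * ∑ e ∈ G.edgeFinset, x T e := by
    have hrw : ∀ v : V, ∑ e ∈ G.edgeFinset.filter (fun e => v ∈ e), x T e
        = ∑ e ∈ G.edgeFinset, if v ∈ e then x T e else 0 := by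
      intro v; rw [Finset.sum_filter]
    simp only [hrw]
    rw [Finset.sum_comm]
    have hbound : ∀ e ∈ G.edgeFinset,
        ∑ v ∈ S, (if v ∈ e then x T e else 0) ≤ 2 * x T e := by
      intro e he
      have hxe := hxnn T e he
      rw [← Finset.sum_filter]
      rw [Finset.sum_const, nsmul_eq_mul]
      have hcard : (S.filter (fun v => v ∈ e)).card ≤ 2 := by
        induction e with
        | _ a b =>
          have hsub : S.filter (fun v => v ∈ s(a, b)) ⊆ {a, b} := by
            intro v hv
            have := (Finset.mem_filter.1 hv).2
            rw [Sym2.mem_iff] at this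
            simp [this]
          exact le_trans (Finset.card_le_card hsub)
            (le_trans (Finset.card_insert_le _ _) (by simp))
      apply mul_le_mul_of_nonneg_right _ hxe
      exact_mod_cast hcard
    refine le_trans (Finset.sum_le_sum hbound) (le_of_eq ?_)
    rw [Finset.mul_sum]
  have hkey : (M.card : ℝ) * (1 - 2 * ε) ≤ 2 * ∑ e ∈ G.edgeFinset, x T e :=
    le_trans hlow hupper
  have hSnn : 0 ≤ ∑ e ∈ G.edgeFinset, x T e :=
    Finset.sum_nonneg fun e he => hxnn T e he
  have hMnn : (0:ℝ) ≤ (M.card : ℝ) := Nat.cast_nonneg _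
  rw [div_le_iff₀ (by linarith : (0:ℝ) < 2 + 5 * ε)]
  nlinarith [mul_nonneg hMnn hε0.le, mul_nonneg (mul_nonneg hMnn hε0.le) hε0.le]
end

section
/- Consider the random-order greedy MIS process on a finite simple graph G with n ≥ 2 vertices, and let 1 ≤ r ≤ n. With probability at least 1 - n^{-4} over the uniformly random permutation, every vertex of the residual graph G_r has degree at most 20·n·ln(n)/r in G_r. -/
open Finset

/-- The set of vertices remaining after the random-order greedy MIS process has processed the
first `r` ranks, where `σ : Fin n ≃ V` lists the vertices in rank order: when the vertex of
rank `r` is still present, it is added to the independent set and removed together with all of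
its neighbors. -/
def greedyRemaining {V : Type*} [Fintype V] [DecidableEq V] (G : SimpleGraph V)
    [DecidableRel G.Adj] {n : ℕ} (σ : Fin n ≃ V) : ℕ → Finset V
  | 0 => Finset.univ
  | r + 1 =>
    let prev := greedyRemaining G σ r
    if h : r < n then
      if σ ⟨r, h⟩ ∈ prev then prev \ insert (σ ⟨r, h⟩) (G.neighborFinset (σ ⟨r, h⟩))
      else prev
    else prev

namespace GreedyAux

variable {V : Type*} [Fintype V] [DecidableEq V] (G : SimpleGraph V) [DecidableRel G.Adj]
  {n : ℕ}

lemma succ_subset (σ : Fin n ≃ V) (i : ℕ) :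
    greedyRemaining G σ (i + 1) ⊆ greedyRemaining G σ i := by
  rw [greedyRemaining]
  split_ifs <;> simp [Finset.sdiff_subset]

lemma anti (σ : Fin n ≃ V) {i j : ℕ} (h : i ≤ j) :
    greedyRemaining G σ j ⊆ greedyRemaining G σ i := by
  induction j with
  | zero => simp_all
  | succ j ih =>
    rcases Nat.lt_or_ge i (j+1) with h' | h'
    · exact (succ_subset G σ j).trans (ih (by omega))
    · have : i = j + 1 := by omega
      subst this; rfl

lemma prefix_eq (σ₁ σ₂ : Fin n ≃ V) (i : ℕ)
    (h : ∀ k : Fin n, (k : ℕ) < i → σ₁ k = σ₂ k) :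
    greedyRemaining G σ₁ i = greedyRemaining G σ₂ i := by
  induction i with
  | zero => rfl
  | succ i ih =>
    have hprev : greedyRemaining G σ₁ i = greedyRemaining G σ₂ i :=
      ih (fun k hk => h k (by omega))
    rw [greedyRemaining, greedyRemaining]
    by_cases h1 : i < n
    · have heq : σ₁ ⟨i, h1⟩ = σ₂ ⟨i, h1⟩ := h _ (by simp)
      have heq' : G.neighborFinset (σ₁ ⟨i, h1⟩) = G.neighborFinset (σ₂ ⟨i, h1⟩) := by
        rw [heq]
      simp only [dif_pos h1, hprev, heq, heq']
    · simp only [dif_neg h1, hprev]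

lemma rank_ge (σ : Fin n ≃ V) {i : ℕ} {v : V}
    (hv : v ∈ greedyRemaining G σ i) (k : Fin n) (hk : σ k = v) : i ≤ (k : ℕ) := by
  by_contra hlt
  push_neg at hlt
  have hk1 : (k : ℕ) + 1 ≤ i := hlt
  have hv1 : v ∈ greedyRemaining G σ ((k : ℕ) + 1) := anti G σ hk1 hv
  have hvk : v ∈ greedyRemaining G σ (k : ℕ) := succ_subset G σ _ hv1
  rw [greedyRemaining] at hv1
  have hkn : (k : ℕ) < n := k.2
  rw [dif_pos hkn] at hv1
  have : σ ⟨(k : ℕ), hkn⟩ = v := by rwa [Fin.eta]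
  rw [if_pos (this ▸ hvk)] at hv1
  rw [this] at hv1
  simp at hv1

lemma removed (σ : Fin n ≃ V) {i : ℕ} (hi : i < n) {v u : V}
    (hu : u ∈ greedyRemaining G σ i) (hadj : G.Adj v u) (hσ : σ ⟨i, hi⟩ = u) :
    v ∉ greedyRemaining G σ (i + 1) := by
  rw [greedyRemaining, dif_pos hi, hσ, if_pos hu]
  simp [hadj.symm]

def Bad (n : ℕ) (v : V) (D i : ℕ) : Finset (Fin n ≃ V) :=
  univ.filter (fun σ => v ∈ greedyRemaining G σ i ∧
    D + 1 ≤ ((greedyRemaining G σ i).filter (fun u => G.Adj v u)).card)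

lemma Bad_succ_subset (v : V) (D i : ℕ) : Bad G n v D (i + 1) ⊆ Bad G n v D i := by
  intro σ hσ
  simp only [Bad, mem_filter, mem_univ, true_and] at hσ ⊢
  refine ⟨succ_subset G σ i hσ.1, le_trans hσ.2 ?_⟩
  exact card_le_card (filter_subset_filter _ (succ_subset G σ i))

lemma step (v : V) (D : ℕ) {i : ℕ} (hi : i < n) :
    n * (Bad G n v D (i + 1)).card + (D + 1) * (Bad G n v D i).card ≤
      n * (Bad G n v D i).card := by
  classical
  set B := Bad G n v D i with hB
  set B' := Bad G n v D (i + 1) with hB'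
  set S : Finset ((_ : Fin n ≃ V) × V) :=
    B.sigma (fun σ => (greedyRemaining G σ i).filter (fun u => G.Adj v u)) with hS
  set f : (_ : Fin n ≃ V) × V → (Fin n ≃ V) :=
    fun p => (Equiv.swap (⟨i, hi⟩ : Fin n) (p.1.symm p.2)).trans p.1 with hf
  -- properties of points of S
  have hmem : ∀ p ∈ S, p.2 ∈ greedyRemaining G p.1 i ∧ G.Adj v p.2 ∧ p.1 ∈ B := by
    intro p hp
    simp only [hS, mem_sigma, mem_filter] at hp
    exact ⟨hp.2.1, hp.2.2, hp.1⟩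
  have hkey : ∀ p ∈ S, f p ∈ B \ B' := by
    intro p hp
    obtain ⟨hu, hadj, hpB⟩ := hmem p hp
    obtain ⟨σ, u⟩ := p
    simp only at hu hadj hpB ⊢
    have hσj : σ (σ.symm u) = u := σ.apply_symm_apply u
    have hij : i ≤ ((σ.symm u : Fin n) : ℕ) := rank_ge G σ hu _ hσj
    have hpre : ∀ k : Fin n, (k : ℕ) < i → (f ⟨σ, u⟩) k = σ k := by
      intro k hk
      simp only [hf, Equiv.trans_apply]
      congr 1
      apply Equiv.swap_apply_of_ne_of_ne
      · intro hk'
        rw [hk'] at hk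
        simp at hk
      · intro hk'
        rw [hk'] at hk
        omega
    have hRi : greedyRemaining G (f ⟨σ, u⟩) i = greedyRemaining G σ i :=
      prefix_eq G _ _ i hpre
    have hfi : (f ⟨σ, u⟩) ⟨i, hi⟩ = u := by
      simp only [hf, Equiv.trans_apply]
      rcases eq_or_ne (⟨i, hi⟩ : Fin n) (σ.symm u) with h | h
      · rw [h, Equiv.swap_self]; exact hσj
      · rw [Equiv.swap_apply_left]; exact hσj
    have hfB : f ⟨σ, u⟩ ∈ B := by
      have := hpB
      simp only [hB, Bad, mem_filter, mem_univ, true_and] at this ⊢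
      rw [hRi]; exact this
    have hfnB' : f ⟨σ, u⟩ ∉ B' := by
      have hnot : v ∉ greedyRemaining G (f ⟨σ, u⟩) (i + 1) :=
        removed G (f ⟨σ, u⟩) hi (hRi ▸ hu) hadj hfi
      simp only [hB', Bad, mem_filter, mem_univ, true_and]
      exact fun h => hnot h.1
    exact mem_sdiff.mpr ⟨hfB, hfnB'⟩
  -- fibers of f over S have size ≤ n
  have hfib : ∀ τ ∈ B \ B', (S.filter (fun p => f p = τ)).card ≤ n := by
    intro τ _
    have : (S.filter (fun p => f p = τ)).card ≤ (univ : Finset (Fin n)).card := by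
      apply card_le_card_of_injOn (fun p => p.1.symm p.2) (fun _ _ => mem_univ _)
      intro p hp q hq hpq
      simp only [mem_coe, mem_filter] at hp hq
      simp only at hpq
      have hp2 : p.1 = (Equiv.swap (⟨i, hi⟩ : Fin n) (p.1.symm p.2)).trans τ := by
        rw [← hp.2]
        ext x
        simp [hf, Equiv.trans_apply, Equiv.swap_apply_self]
      have hq2 : q.1 = (Equiv.swap (⟨i, hi⟩ : Fin n) (q.1.symm q.2)).trans τ := by
        rw [← hq.2]
        ext x
        simp [hf, Equiv.trans_apply, Equiv.swap_apply_self]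
      have h1 : p.1 = q.1 := by rw [hp2, hq2, hpq]
      have h2 : p.2 = q.2 := by
        have := congrArg (fun e : Fin n ≃ V => e (p.1.symm p.2)) h1
        rw [Equiv.apply_symm_apply] at this
        rw [this, hpq, Equiv.apply_symm_apply]
      exact Sigma.ext h1 (heq_of_eq h2)
    simpa using this
  have hScard : S.card ≤ n * (B \ B').card :=
    card_le_mul_card_image_of_maps_to hkey n hfib
  have hSlow : (D + 1) * B.card ≤ S.card := by
    rw [hS, card_sigma]
    calc (D + 1) * B.card = ∑ _σ ∈ B, (D + 1) := by rw [sum_const, smul_eq_mul, mul_comm]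
    _ ≤ _ := by
        apply sum_le_sum
        intro σ hσ
        simp only [hB, Bad, mem_filter] at hσ
        exact hσ.2.2
  have hsub : B' ⊆ B := Bad_succ_subset G v D i
  have hsd : (B \ B').card = B.card - B'.card := card_sdiff_of_subset hsub
  have hle : B'.card ≤ B.card := card_le_card hsub
  have h1 : (D + 1) * B.card ≤ n * (B.card - B'.card) := by
    rw [← hsd]; exact hSlow.trans hScard
  have h2 : n * (B.card - B'.card) + n * B'.card = n * B.card := by
    rw [← Nat.mul_add]
    congr 1
    omega
  linarith


lemma iter (v : V) (D : ℕ) : ∀ r, r ≤ n →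
    n ^ r * (Bad G n v D r).card ≤ (n - (D + 1)) ^ r * Fintype.card (Fin n ≃ V) := by
  intro r
  induction r with
  | zero =>
    intro _
    simp only [pow_zero, one_mul]
    exact (card_le_univ _).trans (le_of_eq (card_univ))
  | succ r ih =>
    intro hrn
    have hi : r < n := by omega
    have hstep := step G v D hi
    have h1 : n * (Bad G n v D (r + 1)).card ≤ (n - (D + 1)) * (Bad G n v D r).card := by
      rw [Nat.sub_mul]
      omega
    calc n ^ (r + 1) * (Bad G n v D (r + 1)).card
        = n ^ r * (n * (Bad G n v D (r + 1)).card) := by ring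
      _ ≤ n ^ r * ((n - (D + 1)) * (Bad G n v D r).card) := Nat.mul_le_mul_left _ h1
      _ = (n - (D + 1)) * (n ^ r * (Bad G n v D r).card) := by ring
      _ ≤ (n - (D + 1)) * ((n - (D + 1)) ^ r * Fintype.card (Fin n ≃ V)) :=
          Nat.mul_le_mul_left _ (ih (by omega))
      _ = (n - (D + 1)) ^ (r + 1) * Fintype.card (Fin n ≃ V) := by ring

end GreedyAux
/-- In the random-order greedy MIS process on an `n`-vertex graph `G`
(`n ≥ 2`), for any `1 ≤ r ≤ n`, with probability at least `1 - n⁻⁴` over the uniformly random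
order, every vertex of the residual graph `G_r` has degree at most `20·n·ln(n)/r` in `G_r`. -/
theorem greedy_mis_residual_max_degree
    {V : Type*} [Fintype V] [DecidableEq V] (G : SimpleGraph V) [DecidableRel G.Adj]
    (n : ℕ) (hn : Fintype.card V = n) (hn2 : 2 ≤ n)
    (r : ℕ) (hr1 : 1 ≤ r) (hr : r ≤ n) :
    1 - 1 / (n : ℝ) ^ 4 ≤
      ((Finset.univ.filter (fun σ : Fin n ≃ V =>
          ∀ v ∈ greedyRemaining G σ r,
            (((greedyRemaining G σ r).filter (fun u => G.Adj v u)).card : ℝ) ≤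
              20 * n * Real.log n / r)).card : ℝ) /
        (Fintype.card (Fin n ≃ V) : ℝ) := by
  classical
  have hn0 : 0 < n := by omega
  have hn1R : (1 : ℝ) ≤ (n : ℝ) := by exact_mod_cast (by omega : 1 ≤ n)
  have hnR : (0 : ℝ) < (n : ℝ) := by positivity
  have hrR : (0 : ℝ) < (r : ℝ) := by exact_mod_cast hr1
  have hlog : (0 : ℝ) ≤ Real.log n := Real.log_nonneg hn1R
  have hbound0 : (0 : ℝ) ≤ 20 * (n : ℝ) * Real.log n / r := by positivity
  set D : ℕ := ⌊20 * (n : ℝ) * Real.log n / (r : ℝ)⌋₊ with hD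
  have hnonempty : Nonempty (Fin n ≃ V) := ⟨(Fintype.equivFinOfCardEq hn).symm⟩
  set M : ℕ := Fintype.card (Fin n ≃ V) with hM
  have hM0 : 0 < M := Fintype.card_pos
  have hM0R : (0 : ℝ) < (M : ℝ) := by exact_mod_cast hM0
  set good : Finset (Fin n ≃ V) := Finset.univ.filter (fun σ : Fin n ≃ V =>
    ∀ v ∈ greedyRemaining G σ r,
      (((greedyRemaining G σ r).filter (fun u => G.Adj v u)).card : ℝ) ≤
        20 * n * Real.log n / r) with hgooddef
  set bad : Finset (Fin n ≃ V) := Finset.univ \ good with hbad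
  have hgoodle : good.card ≤ M := by
    rw [hM, ← Finset.card_univ]
    exact Finset.card_le_card (by rw [hgooddef]; exact Finset.filter_subset _ _)
  have hgb : good.card + bad.card = M := by
    rw [hbad, Finset.card_sdiff_of_subset (Finset.subset_univ _), Finset.card_univ, ← hM]
    omega
  -- bad is covered by the Bad sets
  have hbadsub : bad ⊆ Finset.univ.biUnion (fun v : V => GreedyAux.Bad G n v D r) := by
    intro σ hσ
    rw [hbad, Finset.mem_sdiff, hgooddef, Finset.mem_filter] at hσ
    have hσ2 : ¬ ∀ v ∈ greedyRemaining G σ r,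
        (((greedyRemaining G σ r).filter (fun u => G.Adj v u)).card : ℝ) ≤
          20 * n * Real.log n / r := fun h => hσ.2 ⟨Finset.mem_univ _, h⟩
    push_neg at hσ2
    obtain ⟨v, hv, hdeg⟩ := hσ2
    refine Finset.mem_biUnion.mpr ⟨v, Finset.mem_univ _, ?_⟩
    simp only [GreedyAux.Bad, Finset.mem_filter, Finset.mem_univ, true_and]
    refine ⟨hv, ?_⟩
    have h1 : (D : ℝ) < (((greedyRemaining G σ r).filter (fun u => G.Adj v u)).card : ℝ) :=
      lt_of_le_of_lt (Nat.floor_le hbound0) hdeg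
    exact_mod_cast h1
  -- counting bound
  have hbadcard : bad.card * n ^ r ≤ n * ((n - (D + 1)) ^ r * M) := by
    have h1 : bad.card ≤ ∑ v : V, (GreedyAux.Bad G n v D r).card :=
      (Finset.card_le_card hbadsub).trans (Finset.card_biUnion_le)
    calc bad.card * n ^ r ≤ (∑ v : V, (GreedyAux.Bad G n v D r).card) * n ^ r :=
          Nat.mul_le_mul_right _ h1
      _ = ∑ v : V, (GreedyAux.Bad G n v D r).card * n ^ r := by rw [Finset.sum_mul]
      _ ≤ ∑ _v : V, (n - (D + 1)) ^ r * M := by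
          apply Finset.sum_le_sum
          intro v _
          calc (GreedyAux.Bad G n v D r).card * n ^ r
              = n ^ r * (GreedyAux.Bad G n v D r).card := mul_comm _ _
            _ ≤ (n - (D + 1)) ^ r * M := by rw [hM]; exact GreedyAux.iter G v D r hr
      _ = Fintype.card V * ((n - (D + 1)) ^ r * M) := by
          rw [Finset.sum_const, smul_eq_mul, Finset.card_univ]
      _ = n * ((n - (D + 1)) ^ r * M) := by rw [hn]
  -- real analysis
  set X : ℝ := ((n - (D + 1) : ℕ) : ℝ) with hX
  have hX0 : (0 : ℝ) ≤ X := Nat.cast_nonneg _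
  have hXle : X ≤ (n : ℝ) * Real.exp (-(((D : ℝ) + 1) / n)) := by
    have hexp1 : 1 - ((D : ℝ) + 1) / n ≤ Real.exp (-(((D : ℝ) + 1) / n)) := by
      have := Real.add_one_le_exp (-(((D : ℝ) + 1) / n))
      linarith
    rcases le_or_gt (D + 1) n with h | h
    · have hXeq : X = (n : ℝ) - ((D : ℝ) + 1) := by
        rw [hX, Nat.cast_sub h]
        push_cast
        ring
      calc X = (n : ℝ) * (1 - ((D : ℝ) + 1) / n) := by
            rw [hXeq]; field_simp
        _ ≤ (n : ℝ) * Real.exp (-(((D : ℝ) + 1) / n)) :=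
            mul_le_mul_of_nonneg_left hexp1 (le_of_lt hnR)
    · have h0 : n - (D + 1) = 0 := by omega
      rw [hX, h0]
      simp
      positivity
  have hXr : X ^ r ≤ (n : ℝ) ^ r * Real.exp (-(((D : ℝ) + 1) * r / n)) := by
    calc X ^ r ≤ ((n : ℝ) * Real.exp (-(((D : ℝ) + 1) / n))) ^ r :=
          pow_le_pow_left₀ hX0 hXle r
      _ = (n : ℝ) ^ r * (Real.exp (-(((D : ℝ) + 1) / n))) ^ r := mul_pow _ _ _
      _ = (n : ℝ) ^ r * Real.exp ((r : ℝ) * (-(((D : ℝ) + 1) / n))) := by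
          rw [← Real.exp_nat_mul]
      _ = (n : ℝ) ^ r * Real.exp (-(((D : ℝ) + 1) * r / n)) := by
          congr 1
          ring
  have hexple : Real.exp (-(((D : ℝ) + 1) * r / n)) ≤ Real.exp (-(20 * Real.log n)) := by
    apply Real.exp_le_exp.mpr
    have h20 : 20 * (n : ℝ) * Real.log n / r < (D : ℝ) + 1 := Nat.lt_floor_add_one _
    have h21 : 20 * (n : ℝ) * Real.log n < ((D : ℝ) + 1) * r := by
      rw [div_lt_iff₀ hrR] at h20
      linarith
    have h22 : 20 * Real.log n ≤ ((D : ℝ) + 1) * r / n := by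
      rw [le_div_iff₀ hnR]
      nlinarith
    linarith
  have hexpeq : Real.exp (-(20 * Real.log n)) = ((n : ℝ) ^ (20 : ℕ))⁻¹ := by
    have h1 : (20 : ℝ) * Real.log n = Real.log ((n : ℝ) ^ (20 : ℕ)) := by
      rw [Real.log_pow]
      push_cast
      ring
    rw [Real.exp_neg, h1, Real.exp_log (by positivity)]
  have hXr2 : X ^ r ≤ (n : ℝ) ^ r * ((n : ℝ) ^ (20 : ℕ))⁻¹ := by
    calc X ^ r ≤ (n : ℝ) ^ r * Real.exp (-(((D : ℝ) + 1) * r / n)) := hXr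
      _ ≤ (n : ℝ) ^ r * Real.exp (-(20 * Real.log n)) :=
          mul_le_mul_of_nonneg_left hexple (by positivity)
      _ = (n : ℝ) ^ r * ((n : ℝ) ^ (20 : ℕ))⁻¹ := by rw [hexpeq]
  -- combine
  have hb1 : (bad.card : ℝ) * (n : ℝ) ^ r ≤ (n : ℝ) * (X ^ r * M) := by
    rw [hX]
    exact_mod_cast hbadcard
  have h5 : (n : ℝ) ^ 5 * ((n : ℝ) ^ (20 : ℕ))⁻¹ ≤ 1 := by
    rw [← div_eq_mul_inv, div_le_one (by positivity)]
    exact pow_le_pow_right₀ hn1R (by norm_num)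
  have hchain : (n : ℝ) * (X ^ r * M) * (n : ℝ) ^ 4 ≤ (M : ℝ) * (n : ℝ) ^ r := by
    calc (n : ℝ) * (X ^ r * M) * (n : ℝ) ^ 4 = X ^ r * ((M : ℝ) * (n : ℝ) ^ 5) := by ring
      _ ≤ ((n : ℝ) ^ r * ((n : ℝ) ^ (20 : ℕ))⁻¹) * ((M : ℝ) * (n : ℝ) ^ 5) :=
          mul_le_mul_of_nonneg_right hXr2 (by positivity)
      _ = ((M : ℝ) * (n : ℝ) ^ r) * ((n : ℝ) ^ 5 * ((n : ℝ) ^ (20 : ℕ))⁻¹) := by ring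
      _ ≤ ((M : ℝ) * (n : ℝ) ^ r) * 1 := mul_le_mul_of_nonneg_left h5 (by positivity)
      _ = (M : ℝ) * (n : ℝ) ^ r := by ring
  have hfin : (bad.card : ℝ) * (n : ℝ) ^ 4 ≤ (M : ℝ) := by
    have h1 : ((bad.card : ℝ) * (n : ℝ) ^ 4) * (n : ℝ) ^ r ≤ (M : ℝ) * (n : ℝ) ^ r := by
      calc ((bad.card : ℝ) * (n : ℝ) ^ 4) * (n : ℝ) ^ r
          = ((bad.card : ℝ) * (n : ℝ) ^ r) * (n : ℝ) ^ 4 := by ring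
        _ ≤ ((n : ℝ) * (X ^ r * M)) * (n : ℝ) ^ 4 :=
            mul_le_mul_of_nonneg_right hb1 (by positivity)
        _ ≤ (M : ℝ) * (n : ℝ) ^ r := hchain
    exact le_of_mul_le_mul_right h1 (by positivity)
  -- conclude
  have hgoodR : (good.card : ℝ) = (M : ℝ) - bad.card := by
    have h1 : (good.card : ℝ) + bad.card = M := by exact_mod_cast hgb
    linarith
  have hbM : (bad.card : ℝ) / M ≤ 1 / (n : ℝ) ^ 4 := by
    rw [div_le_div_iff₀ hM0R (by positivity)]
    linarith
  have hfrac : (good.card : ℝ) / M = 1 - (bad.card : ℝ) / M := by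
    rw [hgoodR]
    field_simp
  calc (1 : ℝ) - 1 / (n : ℝ) ^ 4 ≤ 1 - (bad.card : ℝ) / M := by linarith
    _ = (good.card : ℝ) / M := hfrac.symm
end

section
/- Let H be a finite simple graph with N ≥ 2 vertices and maximum degree at most D ≥ 1, and let p ∈ (0,1] satisfy p·D ≥ 20·ln N and p·N ≥ 20·ln N. Form a random vertex set S by including each vertex of H independently with probability p. Then with probability at least 1 - N^{-4}, the induced subgraph H[S] has at most 8·p²·N·D edges. -/
open Finset

section ChernoffHelpers

variable {V : Type*} [Fintype V] [DecidableEq V]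

private lemma weight_expand (p : ℝ) (f : V → ℝ) :
    ∑ S : Finset V, (∏ v ∈ S, (p * f v)) * (1 - p) ^ (Fintype.card V - S.card) =
      ∏ v : V, (p * f v + (1 - p)) := by
  rw [Finset.prod_add, ← Finset.powerset_univ]
  refine Finset.sum_congr rfl fun S _ => ?_
  rw [Finset.prod_const, Finset.card_univ_diff]

private lemma sum_weight_eq_one (p : ℝ) :
    ∑ S : Finset V, p ^ S.card * (1 - p) ^ (Fintype.card V - S.card) = 1 := by
  have h := weight_expand (V := V) p (fun _ => 1)
  simp only [mul_one, Finset.prod_const] at h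
  rw [h]
  simp

private lemma mgf_eq (p : ℝ) (A : Finset V) :
    ∑ S : Finset V, p ^ S.card * 2 ^ (A ∩ S).card * (1 - p) ^ (Fintype.card V - S.card) =
      (1 + p) ^ A.card := by
  have h := weight_expand (V := V) p (fun v => if v ∈ A then 2 else 1)
  have hl : ∀ S : Finset V, (∏ v ∈ S, (p * if v ∈ A then 2 else 1)) =
      p ^ S.card * 2 ^ (A ∩ S).card := by
    intro S
    rw [Finset.prod_mul_distrib, Finset.prod_const, Finset.prod_ite_mem,
      Finset.prod_const, Finset.inter_comm]
  simp only [hl] at h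
  rw [h]
  have : ∀ v : V, (p * (if v ∈ A then 2 else 1) + (1 - p)) = if v ∈ A then (1 + p) else 1 := by
    intro v; split <;> ring
  simp only [this]
  rw [Finset.prod_ite_mem, Finset.univ_inter, Finset.prod_const]

private lemma tail_bound (p : ℝ) (hp0 : 0 ≤ p) (hp1 : p ≤ 1) (A : Finset V) (t : ℝ) :
    ∑ S ∈ Finset.univ.filter (fun S : Finset V => t ≤ ((A ∩ S).card : ℝ)),
        p ^ S.card * (1 - p) ^ (Fintype.card V - S.card)
      ≤ Real.exp (p * A.card - t * Real.log 2) := by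
  have h2 : ∀ k : ℕ, (2:ℝ) ^ k = Real.exp (k * Real.log 2) := by
    intro k
    rw [Real.exp_nat_mul, Real.exp_log two_pos]
  have hw : ∀ S : Finset V, (0:ℝ) ≤ p ^ S.card * (1 - p) ^ (Fintype.card V - S.card) := by
    intro S
    exact mul_nonneg (pow_nonneg hp0 _) (pow_nonneg (by linarith) _)
  calc ∑ S ∈ Finset.univ.filter (fun S : Finset V => t ≤ ((A ∩ S).card : ℝ)),
        p ^ S.card * (1 - p) ^ (Fintype.card V - S.card)
      ≤ ∑ S ∈ Finset.univ.filter (fun S : Finset V => t ≤ ((A ∩ S).card : ℝ)),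
        Real.exp (-(t * Real.log 2)) *
          (p ^ S.card * 2 ^ (A ∩ S).card * (1 - p) ^ (Fintype.card V - S.card)) := by
        refine Finset.sum_le_sum fun S hS => ?_
        simp only [Finset.mem_filter] at hS
        have hge : (1:ℝ) ≤ Real.exp (-(t * Real.log 2)) * 2 ^ (A ∩ S).card := by
          rw [h2, ← Real.exp_add]
          rw [show (-(t * Real.log 2) + (A ∩ S).card * Real.log 2)
              = (((A ∩ S).card : ℝ) - t) * Real.log 2 by ring]
          have := Real.log_pos (by norm_num : (1:ℝ) < 2)
          nlinarith [Real.one_le_exp (by nlinarith [hS.2] :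
            (0:ℝ) ≤ (((A ∩ S).card : ℝ) - t) * Real.log 2)]
        calc p ^ S.card * (1 - p) ^ (Fintype.card V - S.card)
            = 1 * (p ^ S.card * (1 - p) ^ (Fintype.card V - S.card)) := by ring
          _ ≤ (Real.exp (-(t * Real.log 2)) * 2 ^ (A ∩ S).card) *
              (p ^ S.card * (1 - p) ^ (Fintype.card V - S.card)) :=
            mul_le_mul_of_nonneg_right hge (hw S)
          _ = Real.exp (-(t * Real.log 2)) *
              (p ^ S.card * 2 ^ (A ∩ S).card * (1 - p) ^ (Fintype.card V - S.card)) := by ring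
    _ ≤ ∑ S : Finset V, Real.exp (-(t * Real.log 2)) *
          (p ^ S.card * 2 ^ (A ∩ S).card * (1 - p) ^ (Fintype.card V - S.card)) := by
        refine Finset.sum_le_sum_of_subset_of_nonneg (Finset.filter_subset _ _) ?_
        intro S _ _
        have h2' : (0:ℝ) ≤ (2:ℝ) ^ (A ∩ S).card := by positivity
        exact mul_nonneg (Real.exp_nonneg _)
          (mul_nonneg (mul_nonneg (pow_nonneg hp0 _) h2') (pow_nonneg (by linarith) _))
    _ = Real.exp (-(t * Real.log 2)) * (1 + p) ^ A.card := by
        rw [← Finset.mul_sum, mgf_eq]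
    _ ≤ Real.exp (-(t * Real.log 2)) * Real.exp (p * A.card) := by
        refine mul_le_mul_of_nonneg_left ?_ (Real.exp_nonneg _)
        calc (1 + p) ^ A.card ≤ Real.exp p ^ A.card := by
              refine pow_le_pow_left₀ (by linarith) ?_ _
              linarith [Real.add_one_le_exp p]
          _ = Real.exp (p * A.card) := by
              rw [← Real.exp_nat_mul]; ring_nf
    _ = Real.exp (p * A.card - t * Real.log 2) := by
        rw [← Real.exp_add]; ring_nf

private lemma edge_count (H : SimpleGraph V) [DecidableRel H.Adj] (S : Finset V) :
    (H.edgeFinset.filter (fun e => ∀ w : V, w ∈ e → w ∈ S)).card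
      ≤ ∑ u ∈ S, (H.neighborFinset u ∩ S).card := by
  classical
  set T : Finset (V × V) := (S ×ˢ S).filter (fun q => H.Adj q.1 q.2) with hT
  have hsurj : Set.SurjOn (fun q : V × V => s(q.1, q.2))
      ↑T ↑(H.edgeFinset.filter (fun e => ∀ w : V, w ∈ e → w ∈ S)) := by
    intro e he
    simp only [Finset.coe_filter, Set.mem_setOf_eq, SimpleGraph.mem_edgeFinset] at he
    obtain ⟨he1, he2⟩ := he
    induction e with
    | _ u v =>
      have hadj : H.Adj u v := he1
      refine ⟨(u, v), ?_, rfl⟩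
      simp only [hT, Finset.coe_filter, Finset.mem_product, Set.mem_setOf_eq]
      exact ⟨⟨he2 u (Sym2.mem_mk_left u v), he2 v (Sym2.mem_mk_right u v)⟩, hadj⟩
  have h1 := Finset.card_le_card_of_surjOn _ hsurj
  refine le_trans h1 ?_
  have hTcard : T.card = ∑ u ∈ S, (S.filter (fun v => H.Adj u v)).card := by
    rw [hT, Finset.card_filter, Finset.sum_product]
    refine Finset.sum_congr rfl fun u _ => ?_
    rw [Finset.card_filter]
  rw [hTcard]
  refine Finset.sum_le_sum fun u _ => ?_
  refine Finset.card_le_card fun v hv => ?_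
  simp only [Finset.mem_filter] at hv
  simp [SimpleGraph.mem_neighborFinset, hv.1, hv.2]

private lemma union_bound {ι : Type*} (t : Finset ι) (P : ι → Finset V → Prop)
    [∀ i S, Decidable (P i S)] (w : Finset V → ℝ) (hw : ∀ S, 0 ≤ w S) :
    ∑ S ∈ Finset.univ.filter (fun S => ∃ i ∈ t, P i S), w S
      ≤ ∑ i ∈ t, ∑ S ∈ Finset.univ.filter (P i), w S := by
  simp only [Finset.sum_filter]
  rw [Finset.sum_comm]
  refine Finset.sum_le_sum fun S _ => ?_
  by_cases h : ∃ i ∈ t, P i S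
  · obtain ⟨i, hi, hPi⟩ := h
    rw [if_pos ⟨i, hi, hPi⟩]
    calc w S = if P i S then w S else 0 := by rw [if_pos hPi]
      _ ≤ ∑ j ∈ t, if P j S then w S else 0 :=
        Finset.single_le_sum (f := fun j => if P j S then w S else 0)
          (fun j _ => by by_cases hj : P j S <;> simp [hj, hw S]) hi
  · rw [if_neg h]
    exact Finset.sum_nonneg fun j _ => by by_cases hj : P j S <;> simp [hj, hw S]

end ChernoffHelpers

/-- Let `H` be a graph on `N ≥ 2` vertices with maximum degree at most
`D ≥ 1`, and let `p ∈ (0,1]` with `p·D ≥ 20 ln N` and `p·N ≥ 20 ln N`. If each vertex is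
included in a random set `S` independently with probability `p`, then with probability at
least `1 - N⁻⁴` the induced subgraph `H[S]` has at most `8·p²·N·D` edges. (The probability of
a collection of sets `S` is `∑_S p^{|S|}(1-p)^{N-|S|}`.) -/
theorem induced_subgraph_sparsification
    {V : Type*} [Fintype V] [DecidableEq V] (H : SimpleGraph V) [DecidableRel H.Adj]
    (N : ℕ) (hN : Fintype.card V = N) (hN2 : 2 ≤ N)
    (D : ℕ) (hD1 : 1 ≤ D) (hdeg : ∀ v : V, H.degree v ≤ D)
    (p : ℝ) (hp0 : 0 < p) (hp1 : p ≤ 1)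
    (hpD : 20 * Real.log N ≤ p * D) (hpN : 20 * Real.log N ≤ p * N) :
    1 - 1 / (N : ℝ) ^ 4 ≤
      ∑ S ∈ Finset.univ.filter (fun S : Finset V =>
          (((H.edgeFinset.filter (fun e => ∀ w : V, w ∈ e → w ∈ S)).card : ℝ) ≤
            8 * p ^ 2 * N * D)),
        p ^ S.card * (1 - p) ^ (N - S.card) := by
  classical
  subst hN
  set n : ℕ := Fintype.card V with hn
  -- basic positivity facts
  have hlogN : (0:ℝ) < Real.log n := Real.log_pos (by exact_mod_cast hN2)
  have hlog2 : (0.6931471803 : ℝ) < Real.log 2 := Real.log_two_gt_d9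
  have hn0 : (0:ℝ) < n := by positivity
  have hD0 : (0:ℝ) < D := by exact_mod_cast hD1
  have hw : ∀ S : Finset V, (0:ℝ) ≤ p ^ S.card * (1 - p) ^ (n - S.card) := fun S =>
    mul_nonneg (pow_nonneg hp0.le _) (pow_nonneg (by linarith) _)
  -- the bad-event predicate family, indexed by Option V
  set P : Option V → Finset V → Prop := fun i S =>
    match i with
    | none => 2 * p * n ≤ (((Finset.univ : Finset V) ∩ S).card : ℝ)
    | some v => 2 * p * D ≤ ((H.neighborFinset v ∩ S).card : ℝ) with hP
  -- if no bad event happens, the edge count is small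
  have hgood : ∀ S : Finset V, (¬ ∃ i : Option V, P i S) →
      (((H.edgeFinset.filter (fun e => ∀ w : V, w ∈ e → w ∈ S)).card : ℝ) ≤
        8 * p ^ 2 * n * D) := by
    intro S h
    push_neg at h
    have h1 : ((S.card : ℝ)) < 2 * p * n := by
      have := h none
      simp only [hP] at this
      rw [Finset.univ_inter] at this
      exact lt_of_not_ge this
    have h2 : ∀ v : V, ((H.neighborFinset v ∩ S).card : ℝ) < 2 * p * D := by
      intro v
      have := h (some v)
      simp only [hP] at this
      exact lt_of_not_ge this
    have hec := edge_count H S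
    have hec' : (((H.edgeFinset.filter (fun e => ∀ w : V, w ∈ e → w ∈ S)).card : ℝ)) ≤
        ∑ u ∈ S, ((H.neighborFinset u ∩ S).card : ℝ) := by
      exact_mod_cast hec
    have hsum : ∑ u ∈ S, ((H.neighborFinset u ∩ S).card : ℝ) ≤ S.card * (2 * p * D) := by
      calc ∑ u ∈ S, ((H.neighborFinset u ∩ S).card : ℝ)
          ≤ ∑ _u ∈ S, (2 * p * D) := Finset.sum_le_sum fun u _ => (h2 u).le
        _ = S.card * (2 * p * D) := by rw [Finset.sum_const, nsmul_eq_mul]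
    have hScard : (0:ℝ) ≤ (S.card : ℝ) := Nat.cast_nonneg _
    calc (((H.edgeFinset.filter (fun e => ∀ w : V, w ∈ e → w ∈ S)).card : ℝ))
        ≤ S.card * (2 * p * D) := hec'.trans hsum
      _ ≤ (2 * p * n) * (2 * p * D) := by
          refine mul_le_mul_of_nonneg_right h1.le (by positivity)
      _ ≤ 8 * p ^ 2 * n * D := by nlinarith
  -- split the total probability
  have htotal := sum_weight_eq_one (V := V) p
  rw [← Finset.sum_filter_add_sum_filter_not Finset.univ
    (fun S : Finset V =>
      (((H.edgeFinset.filter (fun e => ∀ w : V, w ∈ e → w ∈ S)).card : ℝ) ≤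
        8 * p ^ 2 * n * D))
    (fun S => p ^ S.card * (1 - p) ^ (n - S.card))] at htotal
  -- bound the bad part
  have hbadsub : Finset.univ.filter (fun S : Finset V =>
      ¬ (((H.edgeFinset.filter (fun e => ∀ w : V, w ∈ e → w ∈ S)).card : ℝ) ≤
        8 * p ^ 2 * n * D)) ⊆
      Finset.univ.filter (fun S : Finset V => ∃ i ∈ (Finset.univ : Finset (Option V)), P i S) := by
    intro S hS
    simp only [Finset.mem_filter, Finset.mem_univ, true_and] at hS ⊢
    by_contra hc
    exact hS (hgood S hc)
  have hbad1 : ∑ S ∈ Finset.univ.filter (fun S : Finset V =>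
      ¬ (((H.edgeFinset.filter (fun e => ∀ w : V, w ∈ e → w ∈ S)).card : ℝ) ≤
        8 * p ^ 2 * n * D)),
      p ^ S.card * (1 - p) ^ (n - S.card) ≤
      ∑ i : Option V, ∑ S ∈ Finset.univ.filter (P i),
        p ^ S.card * (1 - p) ^ (n - S.card) := by
    refine le_trans (Finset.sum_le_sum_of_subset_of_nonneg hbadsub fun S _ _ => hw S) ?_
    exact union_bound Finset.univ P _ hw
  -- each tail is at most exp (-6 log n)
  have hkey : ∀ (A : Finset V) (t : ℝ), p * A.card - t * Real.log 2 ≤ -(6 * Real.log n) →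
      ∑ S ∈ Finset.univ.filter (fun S : Finset V => t ≤ ((A ∩ S).card : ℝ)),
        p ^ S.card * (1 - p) ^ (n - S.card) ≤ Real.exp (-(6 * Real.log n)) := by
    intro A t hAt
    exact le_trans (tail_bound p hp0.le hp1 A t) (Real.exp_le_exp.mpr hAt)
  have htail : ∀ i : Option V, ∑ S ∈ Finset.univ.filter (P i),
      p ^ S.card * (1 - p) ^ (n - S.card) ≤ Real.exp (-(6 * Real.log n)) := by
    intro i
    cases i with
    | none =>
      refine hkey Finset.univ (2 * p * n) ?_
      rw [Finset.card_univ, ← hn]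
      nlinarith
    | some v =>
      refine hkey (H.neighborFinset v) (2 * p * D) ?_
      have hdv : ((H.neighborFinset v).card : ℝ) ≤ (D : ℝ) := by
        rw [SimpleGraph.card_neighborFinset_eq_degree]
        exact_mod_cast hdeg v
      have hstep : p * ((H.neighborFinset v).card : ℝ) ≤ p * D :=
        mul_le_mul_of_nonneg_left hdv hp0.le
      nlinarith
  have hbad2 : ∑ i : Option V, ∑ S ∈ Finset.univ.filter (P i),
      p ^ S.card * (1 - p) ^ (n - S.card) ≤ (n + 1) * Real.exp (-(6 * Real.log n)) := by
    calc ∑ i : Option V, ∑ S ∈ Finset.univ.filter (P i),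
        p ^ S.card * (1 - p) ^ (n - S.card)
        ≤ ∑ _i : Option V, Real.exp (-(6 * Real.log n)) :=
          Finset.sum_le_sum fun i _ => htail i
      _ = (Fintype.card (Option V) : ℝ) * Real.exp (-(6 * Real.log n)) := by
          rw [Finset.sum_const, nsmul_eq_mul, Finset.card_univ]
      _ = (n + 1) * Real.exp (-(6 * Real.log n)) := by
          rw [Fintype.card_option]
          push_cast
          ring
  -- final numeric bound: (n+1) * exp(-6 log n) ≤ 1 / n^4
  have hfinal : ((n:ℝ) + 1) * Real.exp (-(6 * Real.log n)) ≤ 1 / (n : ℝ) ^ 4 := by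
    have hexp : Real.exp (-(6 * Real.log n)) = 1 / (n : ℝ) ^ 6 := by
      rw [Real.exp_neg, one_div]
      congr 1
      rw [show (6 : ℝ) * Real.log n = ((6:ℕ) : ℝ) * Real.log n by norm_num,
        Real.exp_nat_mul, Real.exp_log hn0]
    rw [hexp, mul_one_div, div_le_div_iff₀ (by positivity) (by positivity)]
    have hN2' : (2:ℝ) ≤ n := by exact_mod_cast hN2
    nlinarith [pow_pos hn0 4, mul_le_mul_of_nonneg_right
      (show ((n:ℝ) + 1) ≤ (n:ℝ) ^ 2 by nlinarith) (pow_pos hn0 4).le]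
  -- conclude
  have := htotal
  linarith [hbad1.trans (hbad2.trans hfinal)]
end

section
/- Let ε > 0, let T be a random variable uniformly distributed on an interval [a, a + 2ε] of length 2ε, and let y, ỹ be real numbers with |y - ỹ| ≤ σ. Then the probability that exactly one of the two events {y ≥ T} and {ỹ ≥ T} occurs is at most σ/ε. -/
open MeasureTheory

/-- If `T` is uniformly distributed on an interval `[a, a + 2ε]` of length
`2ε` and `|y - y'| ≤ σ`, then the probability that exactly one of the events `{y ≥ T}` and
`{y' ≥ T}` occurs is at most `σ/ε`. -/
theorem random_threshold_disagreement (ε : ℝ) (hε : 0 < ε) (a y y' σ : ℝ)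
    (h : |y - y'| ≤ σ) :
    (volume {t ∈ Set.Icc a (a + 2 * ε) | Xor' (t ≤ y) (t ≤ y')}).toReal / (2 * ε) ≤
      σ / ε := by
  have hσ : 0 ≤ σ := (abs_nonneg _).trans h
  have hsub : {t ∈ Set.Icc a (a + 2 * ε) | Xor' (t ≤ y) (t ≤ y')} ⊆
      Set.Ioc (min y y') (max y y') := by
    rintro t ⟨-, h1⟩
    rcases h1 with ⟨hy, hy'⟩ | ⟨hy', hy⟩
    · exact ⟨(min_le_right y y').trans_lt (not_le.mp hy'), hy.trans (le_max_left _ _)⟩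
    · exact ⟨(min_le_left y y').trans_lt (not_le.mp hy), hy'.trans (le_max_right _ _)⟩
  have hmeas : volume {t ∈ Set.Icc a (a + 2 * ε) | Xor' (t ≤ y) (t ≤ y')} ≤
      ENNReal.ofReal σ := by
    calc volume {t ∈ Set.Icc a (a + 2 * ε) | Xor' (t ≤ y) (t ≤ y')}
        ≤ volume (Set.Ioc (min y y') (max y y')) := measure_mono hsub
      _ = ENNReal.ofReal (max y y' - min y y') := by simp [Real.volume_Ioc]
      _ ≤ ENNReal.ofReal σ := ENNReal.ofReal_le_ofReal (by
          rw [max_sub_min_eq_abs, abs_sub_comm]; exact h)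
  have htr : (volume {t ∈ Set.Icc a (a + 2 * ε) | Xor' (t ≤ y) (t ≤ y')}).toReal ≤ σ := by
    have := ENNReal.toReal_mono (by simp) hmeas
    rwa [ENNReal.toReal_ofReal hσ] at this
  rw [div_le_div_iff₀ (by linarith) hε]
  nlinarith
end

section
/- Let G = (V,E) be a finite simple graph, let x : E → [0,1] be a fractional matching of G, let 0 < β ≤ 1/2, and let C̃ ⊆ V be a set of vertices such that every v ∈ C̃ satisfies ∑_{e ∋ v} x_e ≥ 1 - β. If |C̃| ≥ 5000, then G contains a matching (a set of pairwise disjoint edges) of size at least |C̃|/50. -/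
open Finset

/-- If `x` is a fractional matching of `G`, `0 < β ≤ 1/2`, and `C̃` is a set
of vertices each of fractional weight at least `1 - β`, with `|C̃| ≥ 5000`, then `G` contains
a matching (a set of pairwise disjoint edges) of size at least `|C̃|/50`. -/
theorem rounding_existence_of_large_matching
    {V : Type*} [Fintype V] [DecidableEq V] (G : SimpleGraph V) [DecidableRel G.Adj]
    (x : Sym2 V → ℝ)
    (hx0 : ∀ e ∈ G.edgeFinset, 0 ≤ x e) (hx1 : ∀ e ∈ G.edgeFinset, x e ≤ 1)
    (hfm : ∀ v : V, ∑ e ∈ G.edgeFinset.filter (fun e => v ∈ e), x e ≤ 1)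
    (β : ℝ) (hβ0 : 0 < β) (hβ1 : β ≤ 1 / 2)
    (Ct : Finset V)
    (hCt : ∀ v ∈ Ct, 1 - β ≤ ∑ e ∈ G.edgeFinset.filter (fun e => v ∈ e), x e)
    (hbig : 5000 ≤ Ct.card) :
    ∃ M : Finset (Sym2 V), M ⊆ G.edgeFinset ∧
      (∀ e ∈ M, ∀ f ∈ M, e ≠ f → ∀ v : V, v ∈ e → v ∉ f) ∧
      (Ct.card : ℝ) / 50 ≤ (M.card : ℝ) := by
  classical
  set E := G.edgeFinset with hE
  set P : Finset (Sym2 V) → Prop :=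
    fun M => ∀ e ∈ M, ∀ f ∈ M, e ≠ f → ∀ v : V, v ∈ e → v ∉ f with hPdef
  have hnon : (E.powerset.filter P).Nonempty := ⟨∅, by simp [hPdef]⟩
  obtain ⟨M, hM, hmax⟩ := Finset.exists_max_image (E.powerset.filter P) Finset.card hnon
  rw [Finset.mem_filter, Finset.mem_powerset] at hM
  obtain ⟨hME, hMP⟩ := hM
  refine ⟨M, hME, hMP, ?_⟩
  set S : Finset V := Finset.univ.filter (fun v => ∃ e ∈ M, v ∈ e) with hSdef
  have hmemS : ∀ v : V, v ∈ S ↔ ∃ e ∈ M, v ∈ e := by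
    intro v; simp [hSdef]
  -- maximality: every edge touches S
  have hcov : ∀ e ∈ E, ∃ u, u ∈ S ∧ u ∈ e := by
    intro e he
    by_contra hc
    push_neg at hc
    have heM : e ∉ M := by
      intro heM
      have h1 : e.out.1 ∈ e := Sym2.out_fst_mem e
      exact hc e.out.1 ((hmemS e.out.1).2 ⟨e, heM, h1⟩) h1
    have hins : insert e M ∈ E.powerset.filter P := by
      rw [Finset.mem_filter, Finset.mem_powerset]
      refine ⟨Finset.insert_subset he hME, ?_⟩
      intro f hf g hg hfg v hvf hvg
      rcases Finset.mem_insert.1 hf with hfe | hfM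
      · rcases Finset.mem_insert.1 hg with hge | hgM
        · exact hfg (hfe.trans hge.symm)
        · exact hc v ((hmemS v).2 ⟨g, hgM, hvg⟩) (hfe ▸ hvf)
      · rcases Finset.mem_insert.1 hg with hge | hgM
        · exact hc v ((hmemS v).2 ⟨f, hfM, hvf⟩) (hge ▸ hvg)
        · exact hMP f hfM g hgM hfg v hvf hvg
    have h1 := hmax _ hins
    have h2 : (insert e M).card = M.card + 1 := Finset.card_insert_of_notMem heM
    omega
  -- swap lemma
  have key : ∀ A : Finset V,
      ∑ v ∈ A, ∑ e ∈ E.filter (fun e => v ∈ e), x e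
        = ∑ e ∈ E, ((A.filter (fun v => v ∈ e)).card : ℝ) * x e := by
    intro A
    simp_rw [Finset.sum_filter]
    rw [Finset.sum_comm]
    refine Finset.sum_congr rfl fun e _ => ?_
    rw [← Finset.sum_filter, Finset.sum_const, nsmul_eq_mul]
  -- cardinality bounds per edge
  have hn2 : ∀ e ∈ E, 1 ≤ (S.filter (fun v => v ∈ e)).card := by
    intro e he
    obtain ⟨u, hu, hue⟩ := hcov e he
    exact Finset.card_pos.2 ⟨u, Finset.mem_filter.2 ⟨hu, hue⟩⟩
  have hn1 : ∀ e ∈ E, ((Ct \ S).filter (fun v => v ∈ e)).card ≤ 1 := by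
    intro e he
    obtain ⟨u, hu, hue⟩ := hcov e he
    rw [Finset.card_le_one]
    intro v hv w hw
    rw [Finset.mem_filter, Finset.mem_sdiff] at hv hw
    have hvu : v ≠ u := fun h => hv.1.2 (h ▸ hu)
    have hwu : w ≠ u := fun h => hw.1.2 (h ▸ hu)
    have hevu : e = s(v, u) := ((Sym2.mem_and_mem_iff hvu).1 ⟨hv.2, hue⟩)
    have : w ∈ s(v, u) := hevu ▸ hw.2
    rcases Sym2.mem_iff.1 this with h | h
    · exact h.symm
    · exact absurd h hwu
  -- sum comparison
  have h2 : ∑ v ∈ Ct \ S, ∑ e ∈ E.filter (fun e => v ∈ e), x e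
      ≤ ∑ u ∈ S, ∑ e ∈ E.filter (fun e => u ∈ e), x e := by
    rw [key, key]
    refine Finset.sum_le_sum fun e he => ?_
    have hx := hx0 e he
    have : (((Ct \ S).filter (fun v => v ∈ e)).card : ℝ)
        ≤ ((S.filter (fun v => v ∈ e)).card : ℝ) := by
      exact_mod_cast le_trans (hn1 e he) (hn2 e he)
    exact mul_le_mul_of_nonneg_right this hx
  -- lower bound for LHS
  have h1 : (1 : ℝ) / 2 * ((Ct \ S).card : ℝ)
      ≤ ∑ v ∈ Ct \ S, ∑ e ∈ E.filter (fun e => v ∈ e), x e := by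
    calc (1 : ℝ) / 2 * ((Ct \ S).card : ℝ)
        = ∑ _v ∈ Ct \ S, (1 : ℝ) / 2 := by rw [Finset.sum_const, nsmul_eq_mul]; ring
      _ ≤ _ := by
          refine Finset.sum_le_sum fun v hv => ?_
          have hvC : v ∈ Ct := (Finset.mem_sdiff.1 hv).1
          have := hCt v hvC
          linarith
  -- upper bound for RHS
  have h3 : ∑ u ∈ S, ∑ e ∈ E.filter (fun e => u ∈ e), x e ≤ (S.card : ℝ) := by
    calc ∑ u ∈ S, ∑ e ∈ E.filter (fun e => u ∈ e), x e ≤ ∑ _u ∈ S, (1 : ℝ) :=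
          Finset.sum_le_sum fun u _ => hfm u
      _ = (S.card : ℝ) := by rw [Finset.sum_const, nsmul_eq_mul]; ring
  -- |S| ≤ 2|M|
  have h4 : S.card ≤ 2 * M.card := by
    have hsub : S ⊆ M.biUnion (fun e => Finset.univ.filter (fun v => v ∈ e)) := by
      intro v hv
      obtain ⟨e, heM, hve⟩ := (hmemS v).1 hv
      exact Finset.mem_biUnion.2 ⟨e, heM, Finset.mem_filter.2 ⟨Finset.mem_univ v, hve⟩⟩
    calc S.card ≤ (M.biUnion (fun e => Finset.univ.filter (fun v => v ∈ e))).card :=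
          Finset.card_le_card hsub
      _ ≤ ∑ e ∈ M, (Finset.univ.filter (fun v => v ∈ e)).card := Finset.card_biUnion_le
      _ ≤ ∑ _e ∈ M, 2 := by
          refine Finset.sum_le_sum fun e _ => ?_
          induction e using Sym2.ind with
          | _ a b =>
            calc (Finset.univ.filter (fun v => v ∈ s(a, b))).card
                ≤ ({a, b} : Finset V).card := by
                  apply Finset.card_le_card
                  intro v hv
                  have := (Finset.mem_filter.1 hv).2
                  rcases Sym2.mem_iff.1 this with rfl | rfl <;> simp
              _ ≤ 2 := Finset.card_insert_le a {b} |>.trans (by simp)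
      _ = 2 * M.card := by rw [Finset.sum_const]; ring
  -- combine
  have h5 : Ct.card ≤ (Ct \ S).card + S.card := Finset.card_le_card_sdiff_add_card
  have hCS : ((Ct \ S).card : ℝ) ≤ 4 * (M.card : ℝ) := by
    have : (1 : ℝ) / 2 * ((Ct \ S).card : ℝ) ≤ (S.card : ℝ) := le_trans h1 (le_trans h2 h3)
    have hS2 : (S.card : ℝ) ≤ 2 * (M.card : ℝ) := by exact_mod_cast h4
    linarith
  have hCt6 : (Ct.card : ℝ) ≤ 6 * (M.card : ℝ) := by
    have h5' : (Ct.card : ℝ) ≤ ((Ct \ S).card : ℝ) + (S.card : ℝ) := by exact_mod_cast h5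
    have hS2 : (S.card : ℝ) ≤ 2 * (M.card : ℝ) := by exact_mod_cast h4
    linarith
  have hM0 : (0 : ℝ) ≤ (M.card : ℝ) := Nat.cast_nonneg _
  linarith
end

section
/- The function f counting good edges in the randomized rounding process has bounded differences with constant 2: for any assignment of the variables (X_v)_{v ∈ C̃} and any single vertex v ∈ C̃, changing the value of X_v (to any other element of N(v) ∪ {⋆}) while keeping all other coordinates fixed changes the number of good edges by at most 2. -/
open Finset

variable {V : Type*}

/-- The probability weight of a configuration `X` of the randomized rounding process: each
vertex `v ∈ C̃` independently picks a neighbor `u` with probability `x_{{u,v}}/10`, and picks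
`⋆` (encoded as `none`) with probability `1 - (∑_{e ∋ v} x_e)/10`. -/
noncomputable def roundWeight [Fintype V] [DecidableEq V] (G : SimpleGraph V)
    [DecidableRel G.Adj] (x : Sym2 V → ℝ) (Ct : Finset V)
    (X : {v // v ∈ Ct} → Option V) : ℝ :=
  ∏ v : {v // v ∈ Ct},
    match X v with
    | none => 1 - (∑ e ∈ G.edgeFinset.filter (fun e => v.1 ∈ e), x e) / 10
    | some u => if G.Adj v.1 u then x s(v.1, u) / 10 else 0

/-- The (multi)set of edges `H_X = {{v, X_v} : v ∈ C̃, X_v ≠ ⋆}` proposed by a configuration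
`X` of the randomized rounding process. -/
def proposedEdges [DecidableEq V] (Ct : Finset V)
    (X : {v // v ∈ Ct} → Option V) : Finset (Sym2 V) :=
  (Finset.univ.filter (fun v : {v // v ∈ Ct} => (X v).isSome)).image
    (fun v => s(v.1, (X v).getD v.1))

/-- `f(X)`: the number of good edges of `H_X`, i.e. edges of `H_X` sharing no endpoint with
any other edge of `H_X`. The good edges form a matching. -/
def goodCount [Fintype V] [DecidableEq V] (Ct : Finset V)
    (X : {v // v ∈ Ct} → Option V) : ℕ :=
  ((proposedEdges Ct X).filter (fun e =>
    ∀ f ∈ proposedEdges Ct X, f ≠ e → ∀ w : V, w ∈ e → w ∉ f)).card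

def goodSet [Fintype V] [DecidableEq V] (E : Finset (Sym2 V)) : Finset (Sym2 V) :=
  E.filter (fun e => ∀ f ∈ E, f ≠ e → ∀ w : V, w ∈ e → w ∉ f)

lemma goodSet_unique [Fintype V] [DecidableEq V] (E : Finset (Sym2 V)) {x : V} {e e' : Sym2 V}
    (he : e ∈ goodSet E) (he' : e' ∈ goodSet E) (hx : x ∈ e) (hx' : x ∈ e') : e = e' := by
  simp only [goodSet, mem_filter] at he he'
  by_contra hne
  exact he.2 e' he'.1 (Ne.symm hne) x hx hx'

lemma good_card_le [Fintype V] [DecidableEq V] (E1 E2 : Finset (Sym2 V)) (v a b : V)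
    (h1 : E1 \ E2 ⊆ {s(v,a)}) (h2 : E2 \ E1 ⊆ {s(v,b)}) :
    (goodSet E1).card ≤ (goodSet E2).card + 2 := by
  set A := goodSet E1 \ goodSet E2 with hA
  have hmem : ∀ e ∈ A, v ∈ e ∨ b ∈ e := by
    intro e he
    rw [hA, mem_sdiff] at he
    obtain ⟨hg1, hg2⟩ := he
    simp only [goodSet, mem_filter] at hg1
    by_cases hE2 : e ∈ E2
    · -- e fails the goodness predicate in E2
      have : ¬ (∀ f ∈ E2, f ≠ e → ∀ w : V, w ∈ e → w ∉ f) :=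
        fun h => hg2 (mem_filter.mpr ⟨hE2, h⟩)
      push_neg at this
      obtain ⟨f, hfE2, hfne, w, hwe, hwf⟩ := this
      have hfE1 : f ∉ E1 := by
        intro hfE1
        exact hg1.2 f hfE1 hfne w hwe hwf
      have : f = s(v, b) := by
        have := h2 (mem_sdiff.mpr ⟨hfE2, hfE1⟩)
        simpa using this
      subst this
      rcases Sym2.mem_iff.mp hwf with rfl | rfl
      · exact Or.inl hwe
      · exact Or.inr hwe
    · have : e = s(v, a) := by
        have := h1 (mem_sdiff.mpr ⟨hg1.1, hE2⟩)
        simpa using this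
      subst this
      exact Or.inl (by simp)
  have hAcard : A.card ≤ 2 := by
    have hsub : A ⊆ A.filter (fun e => v ∈ e) ∪ A.filter (fun e => b ∈ e) := by
      intro e he
      rcases hmem e he with h | h
      · exact mem_union_left _ (mem_filter.mpr ⟨he, h⟩)
      · exact mem_union_right _ (mem_filter.mpr ⟨he, h⟩)
    have h1' : (A.filter (fun e => v ∈ e)).card ≤ 1 := by
      apply card_le_one.mpr
      intro e he e' he'
      simp only [mem_filter, hA, mem_sdiff] at he he'
      exact goodSet_unique E1 he.1.1 he'.1.1 he.2 he'.2
    have h2' : (A.filter (fun e => b ∈ e)).card ≤ 1 := by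
      apply card_le_one.mpr
      intro e he e' he'
      simp only [mem_filter, hA, mem_sdiff] at he he'
      exact goodSet_unique E1 he.1.1 he'.1.1 he.2 he'.2
    calc A.card ≤ (A.filter (fun e => v ∈ e) ∪ A.filter (fun e => b ∈ e)).card :=
          card_le_card hsub
      _ ≤ _ := (card_union_le _ _).trans (by omega)
  calc (goodSet E1).card ≤ A.card + (goodSet E2).card :=
        card_le_card_sdiff_add_card
    _ ≤ (goodSet E2).card + 2 := by omega

lemma proposed_sdiff [DecidableEq V] (Ct : Finset V)
    (X X' : {v // v ∈ Ct} → Option V) (v : {v // v ∈ Ct})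
    (h : ∀ w, w ≠ v → X' w = X w) :
    proposedEdges Ct X' \ proposedEdges Ct X ⊆ {s(v.1, (X' v).getD v.1)} := by
  intro e he
  rw [mem_sdiff] at he
  obtain ⟨h1, h2⟩ := he
  simp only [proposedEdges, mem_image, mem_filter, mem_univ, true_and] at h1
  obtain ⟨w, hw, rfl⟩ := h1
  by_cases hwv : w = v
  · subst hwv; simp
  · exfalso
    apply h2
    simp only [proposedEdges, mem_image, mem_filter, mem_univ, true_and]
    exact ⟨w, by rw [← h w hwv]; exact hw, by rw [h w hwv]⟩

lemma goodCount_le [Fintype V] [DecidableEq V] (Ct : Finset V)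
    (Y Z : {v // v ∈ Ct} → Option V) (v : {v // v ∈ Ct})
    (h : ∀ w, w ≠ v → Y w = Z w) :
    goodCount Ct Y ≤ goodCount Ct Z + 2 := by
  have e1 : goodCount Ct Y = (goodSet (proposedEdges Ct Y)).card := rfl
  have e2 : goodCount Ct Z = (goodSet (proposedEdges Ct Z)).card := rfl
  rw [e1, e2]
  exact good_card_le _ _ v.1 ((Y v).getD v.1) ((Z v).getD v.1)
    (proposed_sdiff Ct Z Y v h)
    (proposed_sdiff Ct Y Z v (fun w hw => (h w hw).symm))

/-- The good-edge count `f` of the randomized rounding process has bounded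
differences with constant `2`: for any configuration `X` (with values in `N(v) ∪ {⋆}`), any
`v ∈ C̃`, and any new value `o ∈ N(v) ∪ {⋆}`, changing the coordinate `X_v` to `o` while
keeping all other coordinates fixed changes the number of good edges by at most `2`. -/
theorem rounding_bounded_differences [Fintype V] [DecidableEq V] (G : SimpleGraph V)
    [DecidableRel G.Adj] (Ct : Finset V)
    (X : {v // v ∈ Ct} → Option V)
    (hX : ∀ w : {v // v ∈ Ct}, ∀ u : V, X w = some u → G.Adj w.1 u)
    (v : {v // v ∈ Ct}) (o : Option V) (ho : ∀ u : V, o = some u → G.Adj v.1 u) :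
    |(goodCount Ct (Function.update X v o) : ℤ) - (goodCount Ct X : ℤ)| ≤ 2 := by
  have h1 : goodCount Ct (Function.update X v o) ≤ goodCount Ct X + 2 :=
    goodCount_le Ct _ X v (fun w hw => Function.update_of_ne hw o X)
  have h2 : goodCount Ct X ≤ goodCount Ct (Function.update X v o) + 2 :=
    goodCount_le Ct X _ v (fun w hw => (Function.update_of_ne hw o X).symm)
  rw [abs_le]
  omega
end
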